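/- Let G be a finite simple bipartite graph with bipartition {V₁, V₂} in which every vertex has degree at least 1, and let τ : V(G) → ℕ be given by τ(v) = 1 for v ∈ V₁ and τ(v) = deg(v) for v ∈ V₂. Then for every target set S of G there exists a target set S′ of G with |S′| ≤ |S| such that S′ ⊆ V₂ and every vertex v ∈ V₁ has at least one neighbor in S′. -/
import Mathlib


open scoped Classical

/-- The neighborhood of `u` in `G`, as a finset. -/
noncomputable def nbrs {V : Type*} [Fintype V] (G : SimpleGraph V) (u : V) : Finset V :=
  Finset.univ.filter (fun w => G.Adj u w)

/-- The diffusion process: `diffusion G τ S i` is the set `A[S,i]` of vertices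
active after `i` rounds starting from seed set `S`. -/
noncomputable def diffusion {V : Type*} [Fintype V] (G : SimpleGraph V) (τ : V → ℕ)
    (S : Finset V) : ℕ → Finset V
  | 0 => S
  | (i + 1) => diffusion G τ S i ∪
      Finset.univ.filter (fun u => τ u ≤ (nbrs G u ∩ diffusion G τ S i).card)

/-- The influence of a seed set `S`: all vertices eventually activated. -/
def influence {V : Type*} [Fintype V] (G : SimpleGraph V) (τ : V → ℕ) (S : Finset V) : Set V :=
  {v | ∃ i, v ∈ diffusion G τ S i}

/-- `S` is a target set if its influence is the whole vertex set. -/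
def isTargetSet {V : Type*} [Fintype V] (G : SimpleGraph V) (τ : V → ℕ) (S : Finset V) : Prop :=
  influence G τ S = Set.univ

/-- `C` is a vertex cover of `G`. -/
def isVertexCover {V : Type*} [Fintype V] (G : SimpleGraph V) (C : Finset V) : Prop :=
  ∀ u v, G.Adj u v → u ∈ C ∨ v ∈ C

/-- In the bipartite setting with thresholds 1 on `V₁` and degree on `V₂`,
any target set `S` can be converted into a target set `S' ⊆ V₂` with
`|S'| ≤ |S|` dominating all of `V₁`. -/
theorem targetSet_normalize_bipartite {V : Type*} [Fintype V] (G : SimpleGraph V) (τ : V → ℕ)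
    (V1 V2 : Finset V) (hdisj : Disjoint V1 V2) (hunion : V1 ∪ V2 = Finset.univ)
    (hbip : ∀ u v : V, G.Adj u v → (u ∈ V1 ∧ v ∈ V2) ∨ (u ∈ V2 ∧ v ∈ V1))
    (hdeg : ∀ v : V, 1 ≤ (nbrs G v).card)
    (hτ1 : ∀ v ∈ V1, τ v = 1) (hτ2 : ∀ v ∈ V2, τ v = (nbrs G v).card)
    (S : Finset V) (hS : isTargetSet G τ S) :
    ∃ S' : Finset V, isTargetSet G τ S' ∧ S'.card ≤ S.card ∧ S' ⊆ V2 ∧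
      ∀ v ∈ V1, ∃ w ∈ S', G.Adj v w := by
  classical
  have hne : ∀ v : V, (nbrs G v).Nonempty := fun v => Finset.card_pos.mp (hdeg v)
  have hnadj : ∀ v, G.Adj v ((hne v).choose) := fun v => by
    have := (hne v).choose_spec
    simpa [nbrs] using this
  set g : V → V := fun v => if v ∈ V1 then (hne v).choose else v with hg
  set S' : Finset V := S.image g with hS'
  -- key lemma: a V1 vertex with no help never activates
  have nonact : ∀ v ∈ V1, v ∉ S → (∀ w, G.Adj v w → w ∉ S) →
      ∀ i, v ∉ diffusion G τ S i ∧ ∀ w, G.Adj v w → w ∉ diffusion G τ S i := by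
    intro v hv1 hvS hwS i
    induction i with
    | zero => exact ⟨hvS, hwS⟩
    | succ i ih =>
      obtain ⟨ihv, ihw⟩ := ih
      constructor
      · intro hmem
        rcases Finset.mem_union.mp hmem with h | h
        · exact ihv h
        · have hle : τ v ≤ (nbrs G v ∩ diffusion G τ S i).card := (Finset.mem_filter.mp h).2
          rw [hτ1 v hv1] at hle
          obtain ⟨w, hw⟩ := Finset.card_pos.mp hle
          rw [Finset.mem_inter] at hw
          have : G.Adj v w := by
            have := hw.1; simpa [nbrs] using this
          exact ihw w this hw.2
      · intro w hadj hmem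
        have hw2 : w ∈ V2 := by
          rcases hbip v w hadj with ⟨_, h⟩ | ⟨h, _⟩
          · exact h
          · exact absurd hv1 (Finset.disjoint_right.mp hdisj h)
        rcases Finset.mem_union.mp hmem with h | h
        · exact ihw w hadj h
        · have hle : τ w ≤ (nbrs G w ∩ diffusion G τ S i).card := (Finset.mem_filter.mp h).2
          rw [hτ2 w hw2] at hle
          have heq : nbrs G w ∩ diffusion G τ S i = nbrs G w :=
            Finset.eq_of_subset_of_card_le Finset.inter_subset_left hle
          have hv : v ∈ nbrs G w := by simp [nbrs, hadj.symm]
          rw [← heq] at hv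
          exact ihv (Finset.mem_inter.mp hv).2
  -- domination
  have hdom : ∀ v ∈ V1, ∃ w ∈ S', G.Adj v w := by
    intro v hv1
    by_cases hvS : v ∈ S
    · refine ⟨g v, Finset.mem_image_of_mem g hvS, ?_⟩
      simp only [hg, if_pos hv1]
      exact hnadj v
    · have : ∃ w, G.Adj v w ∧ w ∈ S := by
        by_contra hcon
        push_neg at hcon
        have := nonact v hv1 hvS hcon
        have hv : v ∈ influence G τ S := by rw [hS]; trivial
        obtain ⟨i, hi⟩ := hv
        exact (this i).1 hi
      obtain ⟨w, hadj, hwS⟩ := this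
      have hw2 : w ∈ V2 := by
        rcases hbip v w hadj with ⟨_, h⟩ | ⟨h, _⟩
        · exact h
        · exact absurd hv1 (Finset.disjoint_right.mp hdisj h)
      have hw1 : w ∉ V1 := Finset.disjoint_right.mp hdisj hw2
      refine ⟨w, ?_, hadj⟩
      have : g w = w := by simp [hg, hw1]
      exact this ▸ Finset.mem_image_of_mem g hwS
  -- S' ⊆ V2
  have hsub2 : S' ⊆ V2 := by
    intro x hx
    obtain ⟨v, hvS, rfl⟩ := Finset.mem_image.mp hx
    by_cases hv1 : v ∈ V1
    · simp only [hg, if_pos hv1]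
      rcases hbip v _ (hnadj v) with ⟨_, h⟩ | ⟨h, _⟩
      · exact h
      · exact absurd hv1 (Finset.disjoint_right.mp hdisj h)
    · simp only [hg, if_neg hv1]
      have : v ∈ V1 ∪ V2 := hunion ▸ Finset.mem_univ v
      rcases Finset.mem_union.mp this with h | h
      · exact absurd h hv1
      · exact h
  -- V1 ⊆ diffusion 1
  have hV1 : ∀ v ∈ V1, v ∈ diffusion G τ S' 1 := by
    intro v hv1
    apply Finset.mem_union_right
    rw [Finset.mem_filter]
    refine ⟨Finset.mem_univ v, ?_⟩
    rw [hτ1 v hv1]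
    obtain ⟨w, hwS', hadj⟩ := hdom v hv1
    apply Finset.card_pos.mpr
    exact ⟨w, Finset.mem_inter.mpr ⟨by simp [nbrs, hadj], hwS'⟩⟩
  -- everything in diffusion 2
  have hall : ∀ v : V, v ∈ diffusion G τ S' 2 := by
    intro v
    have : v ∈ V1 ∪ V2 := hunion ▸ Finset.mem_univ v
    rcases Finset.mem_union.mp this with h | h
    · exact Finset.mem_union_left _ (hV1 v h)
    · apply Finset.mem_union_right
      rw [Finset.mem_filter]
      refine ⟨Finset.mem_univ v, ?_⟩
      rw [hτ2 v h]
      have heq : nbrs G v ∩ diffusion G τ S' 1 = nbrs G v := by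
        apply Finset.inter_eq_left.mpr
        intro u hu
        have hadj : G.Adj v u := by simpa [nbrs] using hu
        have hu1 : u ∈ V1 := by
          rcases hbip v u hadj with ⟨h1, _⟩ | ⟨_, h1⟩
          · exact absurd h (Finset.disjoint_left.mp hdisj h1)
          · exact h1
        exact hV1 u hu1
      rw [heq]
  refine ⟨S', ?_, Finset.card_image_le, hsub2, hdom⟩
  apply Set.eq_univ_iff_forall.mpr
  intro v
  exact ⟨2, hall v⟩
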